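/- Suppose R is F-pure and that every Φ(E)-special ideal of R is fully Φ(E)-special. Then there exists a unique largest Φ(E)-special proper ideal 𝔠 of R (a proper Φ(E)-special ideal containing every proper Φ(E)-special ideal of R); this ideal 𝔠 is prime; and the local ring R/𝔠 is strongly F-regular in the sense of Lyubeznik and Smith. -/

import Mathlib

open TensorProduct IsLocalRing DirectSum

universe u v

/-! ### Frobenius twists and base change -/

/-- `R` viewed as an algebra over itself via the `n`-th power of the Frobenius
endomorphism; this plays the role of `R^{(n)}` (an `R`-module via `r • s = r ^ p ^ n * s`). -/
def FrobAlg (R : Type u) (p n : ℕ) [CommRing R] [Fact p.Prime] [CharP R p] : Type u := R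

namespace FrobAlg

variable (R : Type u) (p n : ℕ) [CommRing R] [Fact p.Prime] [CharP R p]

instance : CommRing (FrobAlg R p n) := inferInstanceAs (CommRing R)

instance : Algebra R (FrobAlg R p n) :=
  RingHom.toAlgebra (show R →+* FrobAlg R p n from (frobenius R p) ^ n)

/-- The canonical identification of `R` with the underlying set of `R^{(n)}`. -/
def of (r : R) : FrobAlg R p n := r

end FrobAlg

/-- The Frobenius base change `R^{(n)} ⊗_R M` of an `R`-module `M` along the `n`-th
power of the Frobenius endomorphism of `R`. -/
def FrobBC (R : Type u) (p n : ℕ) [CommRing R] [Fact p.Prime] [CharP R p]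
    (M : Type v) [AddCommGroup M] [Module R M] : Type (max u v) :=
  FrobAlg R p n ⊗[R] M

namespace FrobBC

variable (R : Type u) (p n : ℕ) [CommRing R] [Fact p.Prime] [CharP R p]
  (M : Type v) [AddCommGroup M] [Module R M]

noncomputable instance : AddCommGroup (FrobBC R p n M) :=
  inferInstanceAs (AddCommGroup (FrobAlg R p n ⊗[R] M))

/-- The `R`-module structure on `R^{(n)} ⊗_R M` given by multiplication on the first
factor. -/
noncomputable instance : Module R (FrobBC R p n M) :=
  inferInstanceAs (Module (FrobAlg R p n) (FrobAlg R p n ⊗[R] M))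

variable {M}

/-- The elementary tensor `r ⊗ m` in `R^{(n)} ⊗_R M`. -/
noncomputable def tmul (r : R) (m : M) : FrobBC R p n M := FrobAlg.of R p n r ⊗ₜ[R] m

end FrobBC

/-- `R` is `F`-pure if for every `R`-module `M` the natural map
`M → R^{(1)} ⊗_R M`, `m ↦ 1 ⊗ m`, is injective. -/
def IsFPure (R : Type u) (p : ℕ) [CommRing R] [Fact p.Prime] [CharP R p] : Prop :=
  ∀ (M : Type u) [AddCommGroup M] [Module R M],
    Function.Injective fun m : M => FrobBC.tmul R p 1 (1 : R) m

/-- An ideal `𝔞` of `R` is fully `Φ(E)`-special if for every `n ≥ 1`, every `r ∈ 𝔞` and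
every `e ∈ (0 :_E 𝔞)`, the element `r ⊗ e` is zero in `R^{(n)} ⊗_R E`. -/
def IsFullyPhiSpecial (R : Type u) (p : ℕ) [CommRing R] [Fact p.Prime] [CharP R p]
    (E : Type v) [AddCommGroup E] [Module R E] (𝔞 : Ideal R) : Prop :=
  ∀ n : ℕ, 1 ≤ n → ∀ r ∈ 𝔞, ∀ e : E, (∀ a ∈ 𝔞, a • e = 0) → FrobBC.tmul R p n r e = 0

/-! ### The module `Φ(E)` and the Frobenius shift -/

/-- The Frobenius `a ↦ a ^ p`, as an `R`-algebra map `R^{(n)} → R^{(n+1)}`. -/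
def frobStepAlg (R : Type u) (p n : ℕ) [CommRing R] [Fact p.Prime] [CharP R p] :
    FrobAlg R p n →ₐ[R] FrobAlg R p (n + 1) :=
  { (show FrobAlg R p n →+* FrobAlg R p (n + 1) from frobenius R p) with
    commutes' := fun r => by
      show frobenius R p (((frobenius R p) ^ n) r) = ((frobenius R p) ^ (n + 1)) r
      rw [pow_succ']
      rfl }

/-- The Frobenius `a ↦ a ^ p`, as an `R`-linear map `R^{(n)} → R^{(n+1)}`. -/
def frobStep (R : Type u) (p n : ℕ) [CommRing R] [Fact p.Prime] [CharP R p] :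
    FrobAlg R p n →ₗ[R] FrobAlg R p (n + 1) :=
  (frobStepAlg R p n).toLinearMap

/-- The graded module `Φ(E) = ⊕_{n ≥ 0} R^{(n)} ⊗_R E`. -/
def PhiModule (R : Type u) (p : ℕ) [CommRing R] [Fact p.Prime] [CharP R p]
    (E : Type v) [AddCommGroup E] [Module R E] : Type (max u v) :=
  ⨁ n : ℕ, FrobBC R p n E

namespace PhiModule

variable (R : Type u) (p : ℕ) [CommRing R] [Fact p.Prime] [CharP R p]
  (E : Type v) [AddCommGroup E] [Module R E]

noncomputable instance : AddCommGroup (PhiModule R p E) :=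
  inferInstanceAs (AddCommGroup (⨁ n : ℕ, FrobBC R p n E))

noncomputable instance : Module R (PhiModule R p E) :=
  inferInstanceAs (Module R (⨁ n : ℕ, FrobBC R p n E))

/-- The inclusion of the `n`-th component into `Φ(E)`. -/
noncomputable def of (n : ℕ) (g : FrobBC R p n E) : PhiModule R p E :=
  DirectSum.of (fun m : ℕ => FrobBC R p m E) n g

/-- The Frobenius-semilinear shift operator `x` on `Φ(E)`, sending an element
`r ⊗ e` of the `n`-th component to `r ^ p ⊗ e` in the `(n+1)`-th component. -/
noncomputable def shift : PhiModule R p E →+ PhiModule R p E :=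
  DirectSum.toAddMonoid fun n =>
    (DirectSum.of (fun m : ℕ => FrobBC R p m E) (n + 1)).comp
      (TensorProduct.map (frobStep R p n) (LinearMap.id (R := R) (M := E))).toAddMonoidHom

end PhiModule

/-- An ideal `𝔞` of `R` is `Φ(E)`-special if it is the annihilator of an
`R[x,f]`-submodule of `Φ(E)`, i.e. of an `R`-submodule stable under the shift operator. -/
def IsPhiSpecial (R : Type u) (p : ℕ) [CommRing R] [Fact p.Prime] [CharP R p]
    (E : Type v) [AddCommGroup E] [Module R E] (𝔞 : Ideal R) : Prop :=
  ∃ N : Submodule R (PhiModule R p E),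
    (∀ g ∈ N, PhiModule.shift R p E g ∈ N) ∧ 𝔞 = N.annihilator

/-! ### Further notions -/

/-- The `q`-th bracket (Frobenius) power `I^{[q]}` of an ideal: the ideal generated by
the `q`-th powers of the elements of `I`. -/
def Ideal.bracketPow {S : Type u} [CommRing S] (I : Ideal S) (q : ℕ) : Ideal S :=
  Ideal.span ((fun x => x ^ q) '' (I : Set S))

/-- A Noetherian local ring is regular if its maximal ideal can be generated by
`dim S` elements. -/
def IsRegularLocal (S : Type u) [CommRing S] [IsLocalRing S] : Prop :=
  ∃ s : Finset S, (s.card : WithBot (WithTop ℕ)) = ringKrullDim S ∧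
    Ideal.span (s : Set S) = maximalIdeal S

/-- An ideal `𝔟` of `R` is uniformly `F`-compatible if for every `n ≥ 1` and every
`R`-linear map `φ : R^{(n)} → R` one has `φ(𝔟) ⊆ 𝔟`. -/
def UniformlyFCompatible (R : Type u) (p : ℕ) [CommRing R] [Fact p.Prime] [CharP R p]
    (𝔟 : Ideal R) : Prop :=
  ∀ n : ℕ, 1 ≤ n → ∀ φ : FrobAlg R p n →ₗ[R] R, ∀ b ∈ 𝔟, φ (FrobAlg.of R p n b) ∈ 𝔟

/-- `R` is `F`-finite if `R^{(1)}` is a finitely generated `R`-module. -/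
def IsFFinite (R : Type u) (p : ℕ) [CommRing R] [Fact p.Prime] [CharP R p] : Prop :=
  Module.Finite R (FrobAlg R p 1)

/-- A Noetherian local ring `T` of characteristic `p` is strongly `F`-regular in the
sense of Lyubeznik and Smith if the tight closure of `0` in the injective envelope of
the residue field of `T` is zero. -/
def IsStronglyFRegularLS (T : Type u) (p : ℕ) [CommRing T] [IsLocalRing T]
    [Fact p.Prime] [CharP T p] : Prop :=
  ∀ (ET : Type u) [AddCommGroup ET] [Module T ET],
    Module.Injective T ET →
    ∀ ι : (T ⧸ maximalIdeal T) →ₗ[T] ET, Function.Injective ι →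
    (∀ N : Submodule T ET, N ⊓ LinearMap.range ι = ⊥ → N = ⊥) →
    ∀ m : ET,
      (∃ c : T, (∀ P ∈ minimalPrimes T, c ∉ P) ∧
        ∃ N₀ : ℕ, ∀ n : ℕ, N₀ ≤ n → FrobBC.tmul T p n c m = 0) → m = 0

/-- `Q` is a minimal primary decomposition of the ideal `𝔄`: the `Q i` are primary,
`𝔄` is their intersection, their radicals are pairwise distinct, and none of them
contains the intersection of the others. -/
def IsMinimalPrimaryDecomposition {S : Type u} [CommRing S] (𝔄 : Ideal S) {t : ℕ}
    (Q : Fin t → Ideal S) : Prop :=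
  𝔄 = ⨅ i, Q i ∧ (∀ i, (Q i).IsPrimary) ∧
    (Function.Injective fun i => (Q i).radical) ∧
    ∀ i, ¬ (⨅ j, ⨅ (_ : j ≠ i), Q j) ≤ Q i

section Aux
variable {R : Type u} [CommRing R] {p : ℕ} [Fact p.Prime] [CharP R p]

lemma frobpow_apply (n : ℕ) (r : R) : ((frobenius R p)^n) r = r ^ p ^ n := by
  rw [RingHom.coe_pow, iterate_frobenius]

variable {M : Type v} [AddCommGroup M] [Module R M]

/-- Identification of `R^{(n)}` back with `R`. -/
def FrobAlg.un {R : Type u} {p n : ℕ} [CommRing R] [Fact p.Prime] [CharP R p]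
    (x : FrobAlg R p n) : R := x

lemma FrobAlg.smul_def (n : ℕ) (a : R) (x : FrobAlg R p n) :
    a • x = FrobAlg.of R p n (a ^ p ^ n) * x := by
  show FrobAlg.of R p n (((frobenius R p)^n) a) * x = _
  rw [frobpow_apply]

lemma FrobAlg.un_smul (n : ℕ) (a : R) (x : FrobAlg R p n) :
    FrobAlg.un (a • x) = a ^ p ^ n * FrobAlg.un x := by
  show ((frobenius R p)^n) a * FrobAlg.un x = a ^ p ^ n * FrobAlg.un x
  rw [frobpow_apply]

lemma FrobBC.add_tmul_left {M : Type v} [AddCommGroup M] [Module R M] (n : ℕ) (r r' : R) (e : M) :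
    FrobBC.tmul R p n (r + r') e = FrobBC.tmul R p n r e + FrobBC.tmul R p n r' e :=
  TensorProduct.add_tmul _ _ _

lemma FrobBC.tmul_zero_right {M : Type v} [AddCommGroup M] [Module R M] (n : ℕ) (r : R) :
    FrobBC.tmul R p n r (0 : M) = 0 :=
  TensorProduct.tmul_zero _ _

lemma FrobBC.zero_tmul_left {M : Type v} [AddCommGroup M] [Module R M] (n : ℕ) (e : M) :
    FrobBC.tmul R p n 0 e = 0 :=
  TensorProduct.zero_tmul _ _

lemma FrobBC.smul_tmul_aux (n : ℕ) (r s : R) (e : M) :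
    r • (FrobBC.tmul R p n s e) = FrobBC.tmul R p n (r * s) e := rfl

lemma FrobBC.tmul_add' (n : ℕ) (r : R) (e e' : M) :
    FrobBC.tmul R p n r (e + e') = FrobBC.tmul R p n r e + FrobBC.tmul R p n r e' :=
  TensorProduct.tmul_add _ e e'

lemma FrobBC.tmul_smul_right (n : ℕ) (s a : R) (e : M) :
    FrobBC.tmul R p n s (a • e) = FrobBC.tmul R p n (a ^ p ^ n * s) e := by
  show (FrobAlg.of R p n s) ⊗ₜ[R] (a • e) = FrobAlg.of R p n (a ^ p ^ n * s) ⊗ₜ[R] e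
  rw [← TensorProduct.smul_tmul, FrobAlg.smul_def]
  rfl

end Aux
section Aux2
variable {R : Type u} [CommRing R] {p : ℕ} [Fact p.Prime] [CharP R p]
variable {M : Type v} [AddCommGroup M] [Module R M]

/-- `tmul` with fixed scalar, as an additive hom in the module variable. -/
noncomputable def FrobBC.tmulHom (n : ℕ) (r : R) : M →+ FrobBC R p n M :=
  AddMonoidHom.mk' (fun m => FrobBC.tmul R p n r m) (fun a b => FrobBC.tmul_add' n r a b)

/-- Contraction `R^{(0)} ⊗ M →+ M`, `r ⊗ m ↦ r • m`. -/
noncomputable def contract0 : FrobBC R p 0 M →+ M :=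
  TensorProduct.liftAddHom (smulAddHom R M)
    (by
      intro a r m
      show (FrobAlg.un (a • r)) • m = FrobAlg.un r • (a • m)
      rw [FrobAlg.un_smul, pow_zero, pow_one, mul_comm, mul_smul])

lemma contract0_tmul (r : R) (m : M) : contract0 (FrobBC.tmul R p 0 r m) = r • m := rfl

/-- Expansion `R^{(n+1)} ⊗ M →+ R^{(1)} ⊗ (R^{(n)} ⊗ M)`, `s ⊗ m ↦ s ⊗ (1 ⊗ m)`. -/
noncomputable def expandBC (n : ℕ) :
    FrobBC R p (n+1) M →+ FrobBC R p 1 (FrobBC R p n M) :=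
  TensorProduct.liftAddHom
    (AddMonoidHom.mk'
      (fun s : FrobAlg R p (n+1) =>
        ((FrobBC.tmulHom 1 (FrobAlg.un s)).comp (FrobBC.tmulHom n (1:R)) :
          M →+ FrobBC R p 1 (FrobBC R p n M)))
      (fun s t => AddMonoidHom.ext fun m =>
        FrobBC.add_tmul_left 1 (FrobAlg.un s) (FrobAlg.un t) (FrobBC.tmul R p n 1 m)))
    (by
      intro a s m
      show FrobBC.tmul R p 1 (FrobAlg.un (a • s)) (FrobBC.tmul R p n 1 m)
        = FrobBC.tmul R p 1 (FrobAlg.un s) (FrobBC.tmul R p n 1 (a • m))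
      rw [FrobBC.tmul_smul_right n 1 a m, mul_one]
      have h1 : FrobBC.tmul R p n (a ^ p ^ n) m = (a ^ p ^ n) • FrobBC.tmul R p n 1 m := by
        rw [FrobBC.smul_tmul_aux, mul_one]
      rw [h1, FrobBC.tmul_smul_right 1]
      rw [FrobAlg.un_smul]
      congr 2
      rw [← pow_mul, pow_one, ← pow_succ])

lemma expandBC_tmul (n : ℕ) (s : R) (m : M) :
    expandBC n (FrobBC.tmul R p (n+1) s m) = FrobBC.tmul R p 1 s (FrobBC.tmul R p n 1 m) := rfl

end Aux2

section Purity
variable {R : Type u} [CommRing R] {p : ℕ} [Fact p.Prime] [CharP R p]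

lemma purity_iter (hFpure : IsFPure R p) :
    ∀ (n : ℕ) (M : Type u) [AddCommGroup M] [Module R M] (m : M),
      FrobBC.tmul R p n 1 m = 0 → m = 0 := by
  intro n
  induction n with
  | zero =>
    intro M _ _ m h
    have := congrArg (contract0 (R := R) (p := p)) h
    rw [contract0_tmul, map_zero] at this
    simpa using this
  | succ n ih =>
    intro M _ _ m h
    have h2 := congrArg (expandBC (R := R) (p := p) n) h
    rw [expandBC_tmul, map_zero] at h2
    have h3 : FrobBC.tmul R p 1 (1:R) (FrobBC.tmul R p n (1:R) m)
        = FrobBC.tmul R p 1 (1:R) (0 : FrobBC R p n M) := by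
      rw [h2]
      exact (TensorProduct.tmul_zero _ _).symm
    have h4 : FrobBC.tmul R p n (1:R) m = 0 := hFpure (FrobBC R p n M) h3
    exact ih M m h4
end Purity
section Phi
variable {R : Type u} [CommRing R] {p : ℕ} [Fact p.Prime] [CharP R p]
variable {E : Type v} [AddCommGroup E] [Module R E]

lemma PhiModule.smul_of (r : R) (n : ℕ) (g : FrobBC R p n E) :
    r • PhiModule.of R p E n g = PhiModule.of R p E n (r • g) := by
  show r • DirectSum.of (fun m : ℕ => FrobBC R p m E) n g = _
  rw [← DirectSum.lof_eq_of R, ← map_smul]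
  rfl

lemma PhiModule.of_inj (n : ℕ) {g g' : FrobBC R p n E}
    (h : PhiModule.of R p E n g = PhiModule.of R p E n g') : g = g' :=
  DirectSum.of_injective (β := fun m : ℕ => FrobBC R p m E) n h

lemma PhiModule.shift_of_tmul (n : ℕ) (s : R) (e : E) :
    PhiModule.shift R p E (PhiModule.of R p E n (FrobBC.tmul R p n s e))
      = PhiModule.of R p E (n+1) (FrobBC.tmul R p (n+1) (s ^ p) e) := by
  show DirectSum.toAddMonoid _ (DirectSum.of (fun m : ℕ => FrobBC R p m E) n _) = _
  erw [DirectSum.toAddMonoid_of]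
  show DirectSum.of (fun m : ℕ => FrobBC R p m E) (n+1)
      ((TensorProduct.map (frobStep R p n) (LinearMap.id (R := R) (M := E)))
        (FrobBC.tmul R p n s e)) = _
  congr 1

lemma PhiModule.shift_smul (r : R) (g : PhiModule R p E) :
    PhiModule.shift R p E (r • g) = r ^ p • PhiModule.shift R p E g := by
  have key : ∀ (n : ℕ) (y : FrobBC R p n E),
      PhiModule.shift R p E (r • PhiModule.of R p E n y)
        = r ^ p • PhiModule.shift R p E (PhiModule.of R p E n y) := by
    intro n y
    rw [PhiModule.smul_of]
    induction y using TensorProduct.induction_on with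
    | zero =>
      change PhiModule.shift R p E (PhiModule.of R p E n (r • (0 : FrobBC R p n E))) = r ^ p • PhiModule.shift R p E (PhiModule.of R p E n (0 : FrobBC R p n E))
      rw [smul_zero]
      have h0 : PhiModule.of R p E n (0 : FrobBC R p n E) = 0 := (DirectSum.of (fun m : ℕ => FrobBC R p m E) n).map_zero
      rw [h0, map_zero, smul_zero]
    | tmul x z =>
      have hx : (x ⊗ₜ[R] z : FrobBC R p n E) = FrobBC.tmul R p n (FrobAlg.un x) z := rfl
      rw [hx, FrobBC.smul_tmul_aux, PhiModule.shift_of_tmul, PhiModule.shift_of_tmul,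
        PhiModule.smul_of, FrobBC.smul_tmul_aux, mul_pow]
    | add y₁ y₂ h₁ h₂ =>
      have hadd : ∀ y₁ y₂ : FrobBC R p n E,
          PhiModule.shift R p E (PhiModule.of R p E n (r • y₁)) = r ^ p • PhiModule.shift R p E (PhiModule.of R p E n y₁) →
          PhiModule.shift R p E (PhiModule.of R p E n (r • y₂)) = r ^ p • PhiModule.shift R p E (PhiModule.of R p E n y₂) →
          PhiModule.shift R p E (PhiModule.of R p E n (r • (y₁ + y₂))) = r ^ p • PhiModule.shift R p E (PhiModule.of R p E n (y₁ + y₂)) := by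
        intro y₁ y₂ h₁ h₂
        rw [smul_add]
        have ha : ∀ (w w' : FrobBC R p n E), PhiModule.of R p E n (w + w')
            = PhiModule.of R p E n w + PhiModule.of R p E n w' :=
          fun w w' => (DirectSum.of (fun m : ℕ => FrobBC R p m E) n).map_add w w'
        rw [ha, map_add, ha, map_add, smul_add, h₁, h₂]
      exact hadd y₁ y₂ h₁ h₂
  induction g using DirectSum.induction_on with
  | zero =>
    change PhiModule.shift R p E (r • (0 : PhiModule R p E)) = r ^ p • PhiModule.shift R p E (0 : PhiModule R p E)
    rw [smul_zero, map_zero, smul_zero]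
  | of n y => exact key n y
  | add g₁ g₂ h₁ h₂ =>
    have hadd : ∀ g₁ g₂ : PhiModule R p E,
        PhiModule.shift R p E (r • g₁) = r ^ p • PhiModule.shift R p E g₁ →
        PhiModule.shift R p E (r • g₂) = r ^ p • PhiModule.shift R p E g₂ →
        PhiModule.shift R p E (r • (g₁ + g₂)) = r ^ p • PhiModule.shift R p E (g₁ + g₂) := by
      intro g₁ g₂ h₁ h₂
      rw [smul_add, map_add, map_add, smul_add, h₁, h₂]
    exact hadd g₁ g₂ h₁ h₂

lemma span_shift_stable {S : Set (PhiModule R p E)}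
    (hS : ∀ g ∈ S, PhiModule.shift R p E g ∈ Submodule.span R S) :
    ∀ g ∈ Submodule.span R S, PhiModule.shift R p E g ∈ Submodule.span R S := by
  intro g hg
  induction hg using Submodule.span_induction with
  | mem g hgS => exact hS _ hgS
  | zero => rw [map_zero]; exact Submodule.zero_mem _
  | add a b _ _ iha ihb => rw [map_add]; exact Submodule.add_mem _ iha ihb
  | smul a x _ ih => rw [PhiModule.shift_smul]; exact Submodule.smul_mem _ _ ih

end Phi
section Phi2
variable {R : Type u} [CommRing R] {p : ℕ} [Fact p.Prime] [CharP R p]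
variable {E : Type v} [AddCommGroup E] [Module R E]
lemma PhiModule.of_zero (n : ℕ) : PhiModule.of R p E n 0 = 0 :=
  (DirectSum.of (fun m : ℕ => FrobBC R p m E) n).map_zero
end Phi2
section Matlis
variable {R : Type u} [CommRing R] [IsLocalRing R]
variable {E : Type u} [AddCommGroup E] [Module R E]

lemma matlis_ann_ann (hE : Module.Injective R E)
    (ι : (R ⧸ maximalIdeal R) →ₗ[R] E) (hι : Function.Injective ι)
    (𝔞 : Ideal R) (r : R)
    (hr : ∀ e : E, (∀ a ∈ 𝔞, a • e = 0) → r • e = 0) : r ∈ 𝔞 := by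
  by_contra hr𝔞
  set I : Ideal R := 𝔞.colon (Ideal.span {r}) with hI
  have hIproper : I ≠ ⊤ := by
    intro h
    apply hr𝔞
    have h1 : (1:R) ∈ I := by rw [h]; trivial
    simpa using Ideal.mem_colon_span_singleton.mp h1
  have hIm : I ≤ maximalIdeal R := IsLocalRing.le_maximalIdeal hIproper
  let φ0 : R →ₗ[R] E := ι ∘ₗ (maximalIdeal R).mkQ
  have hφ0 : ∀ a ∈ I, φ0 a = 0 := by
    intro a ha
    have : (maximalIdeal R).mkQ a = 0 := (Submodule.Quotient.mk_eq_zero _).mpr (hIm ha)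
    show ι ((maximalIdeal R).mkQ a) = 0
    rw [this, map_zero]
  let φ : (R ⧸ (I : Submodule R R)) →ₗ[R] E :=
    Submodule.liftQ (I : Submodule R R) φ0 (fun a ha => hφ0 a ha)
  let j0 : R →ₗ[R] (R ⧸ (𝔞 : Submodule R R)) :=
    LinearMap.toSpanSingleton R _ ((𝔞 : Submodule R R).mkQ r)
  have hj0ker : LinearMap.ker j0 = (I : Submodule R R) := by
    ext a
    show a • (𝔞 : Submodule R R).mkQ r = 0 ↔ a ∈ I
    rw [← map_smul, Submodule.mkQ_apply, Submodule.Quotient.mk_eq_zero]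
    show a • r ∈ 𝔞 ↔ _
    rw [smul_eq_mul, ← Ideal.mem_colon_span_singleton]
  let j : (R ⧸ (I : Submodule R R)) →ₗ[R] (R ⧸ (𝔞 : Submodule R R)) :=
    Submodule.liftQ (I : Submodule R R) j0 (le_of_eq hj0ker.symm)
  have hjinj : Function.Injective j := by
    rw [← LinearMap.ker_eq_bot]
    exact Submodule.ker_liftQ_eq_bot _ _ _ (le_of_eq hj0ker)
  obtain ⟨ψ, hψ⟩ := hE.out j hjinj φ
  set e : E := ψ ((𝔞 : Submodule R R).mkQ 1) with he
  have htor : ∀ a ∈ 𝔞, a • e = 0 := by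
    intro a ha
    have h1 : a • ((𝔞 : Submodule R R).mkQ 1) = 0 := by
      rw [← map_smul, Submodule.mkQ_apply, Submodule.Quotient.mk_eq_zero]
      simpa using ha
    rw [he, ← map_smul, h1, map_zero]
  have hre := hr e htor
  have h2 : r • ((𝔞 : Submodule R R).mkQ 1) = j (Submodule.mkQ (I : Submodule R R) 1) := by
    have h3 : j (Submodule.mkQ (I : Submodule R R) 1) = j0 1 := rfl
    rw [h3, ← map_smul, smul_eq_mul, mul_one]
    show _ = (1:R) • ((𝔞 : Submodule R R).mkQ r)
    rw [one_smul]
  have hre2 : r • e = ι ((maximalIdeal R).mkQ 1) := by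
    rw [he, ← map_smul, h2, hψ]
    rfl
  rw [hre2] at hre
  have h1 : (maximalIdeal R).mkQ 1 = 0 := by
    apply hι
    rw [hre, map_zero]
  rw [Submodule.mkQ_apply, Submodule.Quotient.mk_eq_zero] at h1
  exact (maximalIdeal.isMaximal R).ne_top (Ideal.eq_top_iff_one _ |>.mpr h1)
end Matlis
section Core
variable (R : Type u) [CommRing R] [IsNoetherianRing R] [IsLocalRing R]
variable (p : ℕ) [Fact p.Prime] [CharP R p]
variable (E : Type u) [AddCommGroup E] [Module R E]

def torsSet (𝔞 : Ideal R) : Set E := {e | ∀ a ∈ 𝔞, a • e = 0}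

def genSet (𝔞 : Ideal R) : Set (PhiModule R p E) :=
  {g | ∃ (n : ℕ) (s : R) (e : E), e ∈ torsSet R E 𝔞 ∧
    g = PhiModule.of R p E n (FrobBC.tmul R p n s e)}

noncomputable def NN (𝔞 : Ideal R) : Submodule R (PhiModule R p E) := Submodule.span R (genSet R p E 𝔞)

variable {R p E}

lemma tmul_deg_zero (u : R) (e : E) :
    FrobBC.tmul R p 0 u e = FrobBC.tmul R p 0 1 (u • e) := by
  rw [FrobBC.tmul_smul_right, pow_zero, pow_one, mul_one]

lemma NN_shift (𝔞 : Ideal R) :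
    ∀ g ∈ NN R p E 𝔞, PhiModule.shift R p E g ∈ NN R p E 𝔞 := by
  apply span_shift_stable
  rintro g ⟨n, s, e, he, rfl⟩
  rw [PhiModule.shift_of_tmul]
  exact Submodule.subset_span ⟨n+1, s^p, e, he, rfl⟩

lemma kills_NN {𝔞 : Ideal R} (hfa : IsFullyPhiSpecial R p E 𝔞) {a : R} (ha : a ∈ 𝔞) :
    ∀ g ∈ NN R p E 𝔞, a • g = 0 := by
  intro g hg
  induction hg using Submodule.span_induction with
  | mem g hgS =>
    obtain ⟨n, s, e, he, rfl⟩ := hgS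
    rw [PhiModule.smul_of, FrobBC.smul_tmul_aux]
    cases n with
    | zero =>
      rw [tmul_deg_zero]
      have h1 : (a*s) • e = 0 := he _ (Ideal.mul_mem_right s _ ha)
      rw [h1, FrobBC.tmul_zero_right, PhiModule.of_zero]
    | succ n =>
      rw [hfa (n+1) (Nat.succ_le_succ (Nat.zero_le n)) (a*s)
        (Ideal.mul_mem_right s _ ha) e he, PhiModule.of_zero]
  | zero => rw [smul_zero]
  | add x y _ _ hx hy => rw [smul_add, hx, hy, add_zero]
  | smul r x _ hx => rw [smul_comm, hx, smul_zero]

variable [IsLocalRing R]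

lemma sup_special_ann (hE : Module.Injective R E)
    (ι : (R ⧸ maximalIdeal R) →ₗ[R] E) (hι : Function.Injective ι)
    {𝔞 𝔟 : Ideal R}
    (hfa : IsFullyPhiSpecial R p E 𝔞) (hfb : IsFullyPhiSpecial R p E 𝔟) :
    𝔞 ⊔ 𝔟 = (NN R p E 𝔞 ⊓ NN R p E 𝔟).annihilator := by
  apply le_antisymm
  · apply sup_le
    · intro a ha
      rw [Submodule.mem_annihilator]
      intro g hg
      exact kills_NN hfa ha g hg.1
    · intro b hb
      rw [Submodule.mem_annihilator]
      intro g hg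
      exact kills_NN hfb hb g hg.2
  · intro r hr
    rw [Submodule.mem_annihilator] at hr
    apply matlis_ann_ann hE ι hι
    intro e he
    have he𝔞 : e ∈ torsSet R E 𝔞 := fun a ha => he a (Ideal.mem_sup_left ha)
    have he𝔟 : e ∈ torsSet R E 𝔟 := fun a ha => he a (Ideal.mem_sup_right ha)
    have hg : PhiModule.of R p E 0 (FrobBC.tmul R p 0 1 e) ∈ NN R p E 𝔞 ⊓ NN R p E 𝔟 :=
      ⟨Submodule.subset_span ⟨0, 1, e, he𝔞, rfl⟩, Submodule.subset_span ⟨0, 1, e, he𝔟, rfl⟩⟩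
    have h0 := hr _ hg
    rw [PhiModule.smul_of, FrobBC.smul_tmul_aux, mul_one] at h0
    rw [← PhiModule.of_zero (R := R) (p := p) (E := E) 0] at h0
    have h1 : FrobBC.tmul R p 0 r e = 0 := PhiModule.of_inj 0 h0
    have h2 := congrArg (contract0 (R := R) (p := p)) h1
    rw [contract0_tmul, map_zero] at h2
    exact h2

lemma sup_special (hE : Module.Injective R E)
    (ι : (R ⧸ maximalIdeal R) →ₗ[R] E) (hι : Function.Injective ι)
    (hfull : ∀ 𝔞 : Ideal R, IsPhiSpecial R p E 𝔞 → IsFullyPhiSpecial R p E 𝔞)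
    {𝔞 𝔟 : Ideal R} (hs𝔞 : IsPhiSpecial R p E 𝔞) (hs𝔟 : IsPhiSpecial R p E 𝔟) :
    IsPhiSpecial R p E (𝔞 ⊔ 𝔟) := by
  refine ⟨NN R p E 𝔞 ⊓ NN R p E 𝔟, ⟨?_, ?_⟩⟩
  · intro g hg
    exact ⟨NN_shift 𝔞 g hg.1, NN_shift 𝔟 g hg.2⟩
  · exact sup_special_ann hE ι hι (hfull 𝔞 hs𝔞) (hfull 𝔟 hs𝔟)

end Core
section Core2
variable {R : Type u} [CommRing R] [IsLocalRing R]
variable {p : ℕ} [Fact p.Prime] [CharP R p]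
variable {E : Type u} [AddCommGroup E] [Module R E]

lemma smul_deg0_zero {r : R} {e : E}
    (h : r • PhiModule.of R p E 0 (FrobBC.tmul R p 0 1 e) = 0) : r • e = 0 := by
  rw [PhiModule.smul_of, FrobBC.smul_tmul_aux, mul_one] at h
  rw [← PhiModule.of_zero (R := R) (p := p) (E := E) 0] at h
  have h1 : FrobBC.tmul R p 0 r e = 0 := PhiModule.of_inj 0 h
  have h2 := congrArg (contract0 (R := R) (p := p)) h1
  rw [contract0_tmul, map_zero] at h2
  exact h2
end Core2
section Tors
variable {R : Type u} [CommRing R] {p : ℕ} [Fact p.Prime] [CharP R p]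
variable {E : Type u} [AddCommGroup E] [Module R E]

/-- The `𝔠`-torsion submodule `(0 :_E 𝔠)` of `E`. -/
def torsSub (𝔠 : Ideal R) : Submodule R E where
  carrier := {e | ∀ a ∈ 𝔠, a • e = 0}
  add_mem' := by
    intro x y hx hy a ha
    rw [smul_add, hx a ha, hy a ha, add_zero]
  zero_mem' := fun a _ => smul_zero a
  smul_mem' := by
    intro r x hx a ha
    rw [smul_comm, hx a ha, smul_zero]

lemma torsSub_isTorsion (𝔠 : Ideal R) :
    Module.IsTorsionBySet R (torsSub (E := E) 𝔠) 𝔠 :=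
  fun x a => Subtype.ext (x.2 a.1 a.2)

/-- `(0 :_E 𝔠)` as a module over `R ⧸ 𝔠`. -/
noncomputable instance torsModule (𝔠 : Ideal R) : Module (R ⧸ 𝔠) (torsSub (E := E) 𝔠) :=
  (torsSub_isTorsion 𝔠).module

lemma torsSub_mk_smul (𝔠 : Ideal R) (b : R) (x : torsSub (E := E) 𝔠) :
    (Ideal.Quotient.mk 𝔠 b) • x = b • x := rfl

lemma torsSub_coe_smul (𝔠 : Ideal R) (b : R) (x : torsSub (E := E) 𝔠) :
    (((Ideal.Quotient.mk 𝔠 b) • x : torsSub (E := E) 𝔠) : E) = b • (x : E) := rfl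

/-- `t ↦ t ⊗ e` from `R ⧸ 𝔠` to `R^{(n)} ⊗ E`, for `e ∈ (0 :_E 𝔠)`. -/
noncomputable def muMap (𝔠 : Ideal R) (hful : IsFullyPhiSpecial R p E 𝔠)
    (n : ℕ) (hn : 1 ≤ n) (e : torsSub (E := E) 𝔠) :
    (R ⧸ 𝔠) →ₗ[R] FrobBC R p n E :=
  Submodule.liftQ (𝔠 : Submodule R R)
    { toFun := fun r => FrobBC.tmul R p n r (e : E)
      map_add' := fun a b => FrobBC.add_tmul_left n a b _
      map_smul' := fun a r => (FrobBC.smul_tmul_aux n a r _).symm }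
    (by
      intro a ha
      exact hful n hn a ha (e : E) e.2)

lemma muMap_mk (𝔠 : Ideal R) (hful : IsFullyPhiSpecial R p E 𝔠)
    (n : ℕ) (hn : 1 ≤ n) (e : torsSub (E := E) 𝔠) (r : R) :
    muMap 𝔠 hful n hn e (Ideal.Quotient.mk 𝔠 r) = FrobBC.tmul R p n r (e : E) := rfl

lemma muMap_add (𝔠 : Ideal R) (hful : IsFullyPhiSpecial R p E 𝔠)
    (n : ℕ) (hn : 1 ≤ n) (e e' : torsSub (E := E) 𝔠) :
    muMap 𝔠 hful n hn (e + e') = muMap 𝔠 hful n hn e + muMap 𝔠 hful n hn e' := by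
  apply Submodule.linearMap_qext
  apply LinearMap.ext
  intro r
  show FrobBC.tmul R p n r ((e : E) + (e' : E))
    = FrobBC.tmul R p n r (e : E) + FrobBC.tmul R p n r (e' : E)
  exact FrobBC.tmul_add' n r _ _

variable (𝔠 : Ideal R) [CharP (R ⧸ 𝔠) p]

/-- The additive map `(R⧸𝔠)^{(n)} ⊗_{R⧸𝔠} (0:_E 𝔠) →+ R^{(n)} ⊗_R E`. -/
noncomputable def psiMap (hful : IsFullyPhiSpecial R p E 𝔠) (n : ℕ) (hn : 1 ≤ n) :
    FrobBC (R ⧸ 𝔠) p n (torsSub (E := E) 𝔠) →+ FrobBC R p n E :=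
  TensorProduct.liftAddHom
    (AddMonoidHom.mk'
      (fun t : FrobAlg (R ⧸ 𝔠) p n =>
        AddMonoidHom.mk'
          (fun e : torsSub (E := E) 𝔠 => muMap 𝔠 hful n hn e (FrobAlg.un t))
          (fun e e' => by
            show muMap 𝔠 hful n hn (e + e') (FrobAlg.un t) = _
            rw [muMap_add]; rfl))
      (fun t t' => AddMonoidHom.ext fun e => (muMap 𝔠 hful n hn e).map_add _ _))
    (by
      intro t x e
      obtain ⟨r, rfl⟩ := Ideal.Quotient.mk_surjective t
      obtain ⟨v, hv⟩ := Ideal.Quotient.mk_surjective (FrobAlg.un x)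
      have hx : x = FrobAlg.of (R ⧸ 𝔠) p n (Ideal.Quotient.mk 𝔠 v) := hv.symm
      subst hx
      show muMap 𝔠 hful n hn e
          (FrobAlg.un ((Ideal.Quotient.mk 𝔠 r) • FrobAlg.of (R ⧸ 𝔠) p n (Ideal.Quotient.mk 𝔠 v)))
        = muMap 𝔠 hful n hn ((Ideal.Quotient.mk 𝔠 r) • e) (Ideal.Quotient.mk 𝔠 v)
      rw [FrobAlg.un_smul]
      have h1 : (Ideal.Quotient.mk 𝔠 r) ^ p ^ n * FrobAlg.un (FrobAlg.of (R ⧸ 𝔠) p n (Ideal.Quotient.mk 𝔠 v))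
          = Ideal.Quotient.mk 𝔠 (r ^ p ^ n * v) := by
        rw [map_mul, map_pow]; rfl
      rw [h1, muMap_mk, torsSub_mk_smul, muMap_mk]
      show FrobBC.tmul R p n (r ^ p ^ n * v) (e : E) = FrobBC.tmul R p n v (r • (e : E))
      rw [FrobBC.tmul_smul_right])

lemma psiMap_tmul (hful : IsFullyPhiSpecial R p E 𝔠) (n : ℕ) (hn : 1 ≤ n)
    (r : R) (e : torsSub (E := E) 𝔠) :
    psiMap 𝔠 hful n hn (FrobBC.tmul (R ⧸ 𝔠) p n (Ideal.Quotient.mk 𝔠 r) e)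
      = FrobBC.tmul R p n r (e : E) := rfl

end Tors
section Reg
variable {R : Type u} [CommRing R] [IsNoetherianRing R] [IsLocalRing R]
variable {p : ℕ} [Fact p.Prime] [CharP R p]
variable {E : Type u} [AddCommGroup E] [Module R E]

set_option maxHeartbeats 1600000 in
lemma quotient_regular
    (hE : Module.Injective R E)
    (ι : (R ⧸ maximalIdeal R) →ₗ[R] E) (hι : Function.Injective ι)
    (hFpure : IsFPure R p)
    (𝔠 : Ideal R) (h𝔠ful : IsFullyPhiSpecial R p E 𝔠) (h𝔠prime : 𝔠.IsPrime)
    (hlargest : ∀ 𝔟 : Ideal R, 𝔟 ≠ ⊤ → IsPhiSpecial R p E 𝔟 → 𝔟 ≤ 𝔠)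
    [inst1 : IsLocalRing (R ⧸ 𝔠)] [inst2 : CharP (R ⧸ 𝔠) p] :
    IsStronglyFRegularLS (R ⧸ 𝔠) p := by
  intro ET _ _ hET ιT hιT hessT m hm
  by_contra hm0
  obtain ⟨c, hc, N₀, hcm⟩ := hm
  haveI : 𝔠.IsPrime := h𝔠prime
  have hbotmem : ⊥ ∈ minimalPrimes (R ⧸ 𝔠) := by
    constructor
    · exact ⟨Ideal.bot_prime, bot_le⟩
    · intro y _ _; exact bot_le
  have hcne : c ≠ 0 := by
    intro h
    exact hc ⊥ hbotmem (by rw [h]; exact Ideal.zero_mem ⊥)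
  obtain ⟨c', hc'⟩ := Ideal.Quotient.mk_surjective c
  have hc'notin : c' ∉ 𝔠 := by
    intro h
    exact hcne (hc' ▸ Ideal.Quotient.eq_zero_iff_mem.mpr h)
  have h𝔠m : 𝔠 ≤ maximalIdeal R := IsLocalRing.le_maximalIdeal h𝔠prime.ne_top
  set q : (R ⧸ 𝔠) →+* (R ⧸ maximalIdeal R) := Ideal.Quotient.factor h𝔠m
    with hqdef
  have hqmk : ∀ x : R, q (Ideal.Quotient.mk 𝔠 x) = Ideal.Quotient.mk (maximalIdeal R) x :=
    fun x => Ideal.Quotient.factor_mk _ x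
  have hqsurj : Function.Surjective q := by
    intro y
    obtain ⟨x, rfl⟩ := Ideal.Quotient.mk_surjective y
    exact ⟨Ideal.Quotient.mk 𝔠 x, hqmk x⟩
  letI : Field (R ⧸ maximalIdeal R) := Ideal.Quotient.field _
  have hkerq : RingHom.ker q = maximalIdeal (R ⧸ 𝔠) :=
    IsLocalRing.ker_eq_maximalIdeal q hqsurj
  -- ι lands in the 𝔠-torsion submodule of E
  have hιtors : ∀ x : R ⧸ maximalIdeal R, ι x ∈ torsSub (E := E) 𝔠 := by
    intro x a ha
    rw [← map_smul]
    obtain ⟨y, rfl⟩ := Ideal.Quotient.mk_surjective x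
    have h1 : a • Ideal.Quotient.mk (maximalIdeal R) y = Ideal.Quotient.mk _ (a * y) := by
      rw [← smul_eq_mul]
      exact (Submodule.Quotient.mk_smul _ a y)
    have h2 : a • Ideal.Quotient.mk (maximalIdeal R) y = 0 := by
      rw [h1]
      exact Ideal.Quotient.eq_zero_iff_mem.mpr (Ideal.mul_mem_right y _ (h𝔠m ha))
    rw [h2, map_zero]
  -- the embedding of the residue field into the torsion submodule
  set G0 : (R ⧸ 𝔠) →ₗ[R ⧸ 𝔠] torsSub (E := E) 𝔠 :=
    { toFun := fun t => ⟨ι (q t), hιtors _⟩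
      map_add' := fun t t' => Subtype.ext
        (show ι (q (t + t')) = ι (q t) + ι (q t') by rw [map_add, map_add])
      map_smul' := by
        intro t t'
        obtain ⟨r, rfl⟩ := Ideal.Quotient.mk_surjective t
        apply Subtype.ext
        rw [RingHom.id_apply, torsSub_coe_smul]
        show ι (q (Ideal.Quotient.mk 𝔠 r * t')) = r • ι (q t')
        rw [map_mul, ← map_smul]
        congr 1 } with hG0def
  have hG0mk : ∀ r : R, ((G0 (Ideal.Quotient.mk 𝔠 r) : torsSub (E := E) 𝔠) : E)
      = ι (Ideal.Quotient.mk (maximalIdeal R) r) := by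
    intro r
    show ι (q (Ideal.Quotient.mk 𝔠 r)) = _
    rw [hqmk]
  -- annihilator of m
  set τ : Ideal (R ⧸ 𝔠) := Ideal.torsionOf (R ⧸ 𝔠) ET m with hτdef
  have hτm : τ ≤ maximalIdeal (R ⧸ 𝔠) := by
    apply IsLocalRing.le_maximalIdeal
    intro h
    apply hm0
    have h1 : (1 : R ⧸ 𝔠) ∈ τ := by rw [h]; trivial
    rw [hτdef, Ideal.mem_torsionOf_iff, one_smul] at h1
    exact h1
  have hτq : ∀ t ∈ τ, q t = 0 := by
    intro t ht
    have h1 : t ∈ RingHom.ker q := by rw [hkerq]; exact hτm ht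
    exact h1
  set fX : ((R ⧸ 𝔠) ⧸ (τ : Submodule (R ⧸ 𝔠) (R ⧸ 𝔠))) →ₗ[R ⧸ 𝔠] ET :=
    Submodule.liftQ _ (LinearMap.toSpanSingleton _ _ m) (le_refl _) with hfXdef
  have hfXinj : Function.Injective fX := by
    rw [← LinearMap.ker_eq_bot]
    exact Submodule.ker_liftQ_eq_bot _ _ _ (le_refl _)
  set g : ((R ⧸ 𝔠) ⧸ (τ : Submodule (R ⧸ 𝔠) (R ⧸ 𝔠))) →ₗ[R ⧸ 𝔠] torsSub (E := E) 𝔠 :=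
    Submodule.liftQ _ G0 (by
      intro t ht
      rw [LinearMap.mem_ker]
      apply Subtype.ext
      show ι (q t) = 0
      rw [hτq t ht, map_zero]) with hgdef
  letI modX : Module R ((R ⧸ 𝔠) ⧸ (τ : Submodule (R ⧸ 𝔠) (R ⧸ 𝔠))) :=
    Module.compHom _ (Ideal.Quotient.mk 𝔠)
  letI modET : Module R ET := Module.compHom ET (Ideal.Quotient.mk 𝔠)
  set fXR : ((R ⧸ 𝔠) ⧸ (τ : Submodule (R ⧸ 𝔠) (R ⧸ 𝔠))) →ₗ[R] ET :=
    { toFun := fX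
      map_add' := fX.map_add
      map_smul' := fun r x => fX.map_smul (Ideal.Quotient.mk 𝔠 r) x } with hfXRdef
  set gR : ((R ⧸ 𝔠) ⧸ (τ : Submodule (R ⧸ 𝔠) (R ⧸ 𝔠))) →ₗ[R] E :=
    { toFun := fun x => ((g x : torsSub (E := E) 𝔠) : E)
      map_add' := fun x y => by
        show ((g (x + y) : torsSub (E := E) 𝔠) : E)
          = ((g x : torsSub (E := E) 𝔠) : E) + ((g y : torsSub (E := E) 𝔠) : E)
        rw [map_add]; rfl
      map_smul' := fun r x => by
        rw [RingHom.id_apply]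
        show ((g ((Ideal.Quotient.mk 𝔠 r) • x) : torsSub (E := E) 𝔠) : E) = r • _
        rw [map_smul, torsSub_coe_smul] } with hgRdef
  obtain ⟨H, hH⟩ := hE.out fXR (by exact hfXinj) gR
  have hHtors : ∀ y : ET, H y ∈ torsSub (E := E) 𝔠 := by
    intro y a ha
    have hz : Ideal.Quotient.mk 𝔠 a = 0 := Ideal.Quotient.eq_zero_iff_mem.mpr ha
    have h2 : a • H y = H ((Ideal.Quotient.mk 𝔠 a) • y) := (H.map_smul a y).symm
    rw [h2, hz, zero_smul, map_zero]
  set hT : ET →ₗ[R ⧸ 𝔠] torsSub (E := E) 𝔠 :=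
    { toFun := fun y => ⟨H y, hHtors y⟩
      map_add' := fun x y => Subtype.ext (by show H (x + y) = H x + H y; rw [map_add])
      map_smul' := by
        intro t y
        obtain ⟨r, rfl⟩ := Ideal.Quotient.mk_surjective t
        apply Subtype.ext
        rw [RingHom.id_apply, torsSub_coe_smul]
        show H ((Ideal.Quotient.mk 𝔠 r) • y) = r • H y
        exact H.map_smul r y } with hhTdef
  have hfX1 : fXR (Submodule.Quotient.mk (1 : R ⧸ 𝔠)) = m := by
    show fX (Submodule.Quotient.mk 1) = m
    show (1 : R ⧸ 𝔠) • m = m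
    rw [one_smul]
  have hHm : H m = ι (Ideal.Quotient.mk (maximalIdeal R) 1) := by
    rw [← hfX1, hH]
    show ((g (Submodule.Quotient.mk 1) : torsSub (E := E) 𝔠) : E) = _
    show ((G0 1 : torsSub (E := E) 𝔠) : E) = _
    have h1 : (1 : R ⧸ 𝔠) = Ideal.Quotient.mk 𝔠 1 := rfl
    rw [h1, hG0mk]
  have hHmne : H m ≠ 0 := by
    rw [hHm]
    intro h
    have h1 : Ideal.Quotient.mk (maximalIdeal R) 1 = 0 := hι (by rw [h, map_zero])
    rw [Ideal.Quotient.eq_zero_iff_mem] at h1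
    exact (maximalIdeal.isMaximal R).ne_top ((Ideal.eq_top_iff_one _).mpr h1)
  set N₁ := max N₀ 1 with hN₁def
  have hkey : ∀ n : ℕ, N₁ ≤ n → FrobBC.tmul R p n c' (H m) = 0 := by
    intro n hn
    have h0 := hcm n (le_trans (le_max_left _ _) hn)
    rw [← hc'] at h0
    set Dn : FrobBC (R ⧸ 𝔠) p n ET →+ FrobBC (R ⧸ 𝔠) p n (torsSub (E := E) 𝔠) :=
      (TensorProduct.map (LinearMap.id (R := R ⧸ 𝔠) (M := FrobAlg (R ⧸ 𝔠) p n))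
        hT).toAddMonoidHom with hDn
    have h1 := congrArg Dn h0
    rw [map_zero] at h1
    have h2 : Dn (FrobBC.tmul (R ⧸ 𝔠) p n (Ideal.Quotient.mk 𝔠 c') m)
        = FrobBC.tmul (R ⧸ 𝔠) p n (Ideal.Quotient.mk 𝔠 c') (hT m) := by
      show (TensorProduct.map _ hT)
        (FrobAlg.of (R ⧸ 𝔠) p n (Ideal.Quotient.mk 𝔠 c') ⊗ₜ[R ⧸ 𝔠] m) = _
      rw [TensorProduct.map_tmul]
      rfl
    rw [h2] at h1
    have h3 := congrArg (psiMap 𝔠 h𝔠ful n (le_trans (le_max_right _ _) hn)) h1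
    rw [map_zero] at h3
    exact h3
  set Sgen : Set (PhiModule R p E) := {g | ∃ n : ℕ, N₁ ≤ n ∧ ∃ s : R,
    g = PhiModule.of R p E n (FrobBC.tmul R p n s (H m))} with hSgen
  set Nst := Submodule.span R Sgen with hNst
  have hstable : ∀ g ∈ Nst, PhiModule.shift R p E g ∈ Nst := by
    apply span_shift_stable
    rintro g ⟨n, hn, s, rfl⟩
    rw [PhiModule.shift_of_tmul]
    exact Submodule.subset_span ⟨n+1, le_trans hn (Nat.le_succ n), s^p, rfl⟩
  have hc'ann : c' ∈ Nst.annihilator := by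
    rw [Submodule.mem_annihilator]
    intro g hg
    induction hg using Submodule.span_induction with
    | mem g hgS =>
      obtain ⟨n, hn, s, rfl⟩ := hgS
      rw [PhiModule.smul_of, FrobBC.smul_tmul_aux]
      have h4 : FrobBC.tmul R p n (c' * s) (H m) = 0 := by
        rw [mul_comm, ← FrobBC.smul_tmul_aux, hkey n hn, smul_zero]
      rw [h4, PhiModule.of_zero]
    | zero => rw [smul_zero]
    | add x y _ _ hx hy => rw [smul_add, hx, hy, add_zero]
    | smul r x _ hx => rw [smul_comm, hx, smul_zero]
  have hproper : Nst.annihilator ≠ ⊤ := by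
    intro htop
    have h1 : (1:R) ∈ Nst.annihilator := by rw [htop]; trivial
    rw [Submodule.mem_annihilator] at h1
    have h2 := h1 (PhiModule.of R p E N₁ (FrobBC.tmul R p N₁ 1 (H m)))
      (Submodule.subset_span ⟨N₁, le_refl _, 1, rfl⟩)
    rw [one_smul] at h2
    rw [← PhiModule.of_zero (R := R) (p := p) (E := E) N₁] at h2
    exact hHmne (purity_iter hFpure N₁ E (H m) (PhiModule.of_inj N₁ h2))
  exact hc'notin (hlargest _ hproper ⟨Nst, hstable, rfl⟩ hc'ann)
end Reg
theorem largest_special_proper_ideal_prime_and_quotient_strongly_F_regular (R : Type u) [CommRing R] [IsNoetherianRing R] [IsLocalRing R]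
    (p : ℕ) [Fact p.Prime] [CharP R p]
    (E : Type u) [AddCommGroup E] [Module R E]
    (hE : Module.Injective R E)
    (ι : (R ⧸ maximalIdeal R) →ₗ[R] E) (hι : Function.Injective ι)
    (hess : ∀ N : Submodule R E, N ⊓ LinearMap.range ι = ⊥ → N = ⊥)
    (hFpure : IsFPure R p)
    (hfull : ∀ 𝔞 : Ideal R, IsPhiSpecial R p E 𝔞 → IsFullyPhiSpecial R p E 𝔞) :
    ∃ 𝔠 : Ideal R, 𝔠 ≠ ⊤ ∧ IsPhiSpecial R p E 𝔠 ∧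
      (∀ 𝔟 : Ideal R, 𝔟 ≠ ⊤ → IsPhiSpecial R p E 𝔟 → 𝔟 ≤ 𝔠) ∧ 𝔠.IsPrime ∧
      (∀ [inst1 : IsLocalRing (R ⧸ 𝔠)] [inst2 : CharP (R ⧸ 𝔠) p],
        IsStronglyFRegularLS (R ⧸ 𝔠) p) := by
  classical
  have hmne : maximalIdeal R ≠ ⊤ := (maximalIdeal.isMaximal R).ne_top
  set S : Set (Ideal R) := {𝔞 | 𝔞 ≠ ⊤ ∧ IsPhiSpecial R p E 𝔞} with hS
  -- the annihilator of the whole module is a proper special ideal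
  have h0 : (⊤ : Submodule R (PhiModule R p E)).annihilator ∈ S := by
    constructor
    · -- proper
      intro htop
      apply hmne
      rw [Ideal.eq_top_iff_one]
      have h1 : (1:R) ∈ (⊤ : Submodule R (PhiModule R p E)).annihilator := by
        rw [htop]; trivial
      rw [Submodule.mem_annihilator] at h1
      set e0 : E := ι ((maximalIdeal R).mkQ 1) with he0
      have h2 := h1 (PhiModule.of R p E 0 (FrobBC.tmul R p 0 1 e0)) trivial
      have h3 := smul_deg0_zero h2
      rw [one_smul] at h3
      rw [he0] at h3
      have h4 : (maximalIdeal R).mkQ 1 = 0 := by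
        apply hι; rw [h3, map_zero]
      rw [Submodule.mkQ_apply, Submodule.Quotient.mk_eq_zero] at h4
      exact h4
    · exact ⟨⊤, fun g _ => trivial, rfl⟩
  have hwf : WellFounded ((· > ·) : Ideal R → Ideal R → Prop) := wellFounded_gt
  obtain ⟨𝔠, h𝔠S, hmax⟩ := hwf.has_min S ⟨_, h0⟩
  have hlargest : ∀ 𝔟 : Ideal R, 𝔟 ≠ ⊤ → IsPhiSpecial R p E 𝔟 → 𝔟 ≤ 𝔠 := by
    intro 𝔟 hbne hsb
    have hsupm : 𝔠 ⊔ 𝔟 ≤ maximalIdeal R :=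
      sup_le (IsLocalRing.le_maximalIdeal h𝔠S.1) (IsLocalRing.le_maximalIdeal hbne)
    have hsupS : (𝔠 ⊔ 𝔟) ∈ S := by
      constructor
      · intro heq
        rw [heq] at hsupm
        exact hmne (top_le_iff.mp hsupm)
      · exact sup_special hE ι hι hfull h𝔠S.2 hsb
    have hnlt : ¬ (𝔠 ⊔ 𝔟 > 𝔠) := hmax _ hsupS
    have : 𝔠 ⊔ 𝔟 = 𝔠 := by
      rcases lt_or_eq_of_le (le_sup_left : 𝔠 ≤ 𝔠 ⊔ 𝔟) with h | h
      · exact absurd h hnlt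
      · exact h.symm
    calc 𝔟 ≤ 𝔠 ⊔ 𝔟 := le_sup_right
    _ = 𝔠 := this
  have hp1 : p - 1 + 1 = p := Nat.succ_pred_eq_of_pos (Fact.out : p.Prime).pos
  have hprime : 𝔠.IsPrime := by
    constructor
    · exact h𝔠S.1
    · intro a b hab
      by_contra hcon
      push_neg at hcon
      obtain ⟨ha, hb⟩ := hcon
      obtain ⟨N, hNx, hNann⟩ := h𝔠S.2
      set N' : Submodule R (PhiModule R p E) :=
        Submodule.map (LinearMap.lsmul R (PhiModule R p E) a) N with hN'
      have hN'x : ∀ g ∈ N', PhiModule.shift R p E g ∈ N' := by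
        rintro g ⟨n, hn, rfl⟩
        refine ⟨a^(p-1) • PhiModule.shift R p E n,
          Submodule.smul_mem _ _ (hNx n hn), ?_⟩
        show a • (a^(p-1) • PhiModule.shift R p E n) = PhiModule.shift R p E (a • n)
        rw [PhiModule.shift_smul, smul_smul, ← pow_succ', hp1]
      have hb' : b ∈ N'.annihilator := by
        rw [Submodule.mem_annihilator]
        rintro g ⟨n, hn, rfl⟩
        show b • (a • n) = 0
        have h1 : (a*b) • n = 0 := by
          have h2 : a*b ∈ N.annihilator := by rw [← hNann]; exact hab
          exact Submodule.mem_annihilator.mp h2 n hn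
        rw [smul_smul, mul_comm b a, h1]
      have hN'proper : N'.annihilator ≠ ⊤ := by
        intro htop
        apply ha
        rw [hNann, Submodule.mem_annihilator]
        intro n hn
        have h1 : (1:R) ∈ N'.annihilator := by rw [htop]; trivial
        rw [Submodule.mem_annihilator] at h1
        have := h1 (a • n) ⟨n, hn, rfl⟩
        rwa [one_smul] at this
      have hle : N'.annihilator ≤ 𝔠 := hlargest _ hN'proper ⟨N', hN'x, rfl⟩
      exact hb (hle hb')
  refine ⟨𝔠, h𝔠S.1, h𝔠S.2, hlargest, hprime, ?_⟩
  intro inst1 inst2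
  exact quotient_regular hE ι hι hFpure 𝔠 (hfull 𝔠 h𝔠S.2) hprime hlargest
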